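/- Let μ be a probability measure on ℝ^X (X finite) with a density whose support is open, convex, and contains 0, and suppose for each x ∈ X a sequence of utilities u_n(x) ∈ ℝ satisfies: for all distinct x, y ∈ X with π(x) > π(y) (π a fixed ranking), u_n(x) − u_n(y) → +∞. Then for every D ⊆ X with x ∈ D, μ({ε : u_n(x) + ε(x) > u_n(y) + ε(y) for all y ∈ D \ {x}}) → 1 if x is the π-best element of D, and → 0 otherwise. -/

import Mathlib

open MeasureTheory Filter

/-- Tail probabilities vanish along a sequence of thresholds tending to infinity. -/
lemma tail_measure_tendsto_zero {α : Type*} [MeasurableSpace α] (μ : Measure α)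
    [IsFiniteMeasure μ] {g : α → ℝ} (hg : Measurable g) {c : ℕ → ℝ}
    (hc : Tendsto c atTop atTop) :
    Tendsto (fun n => μ {a | c n ≤ g a}) atTop (nhds 0) := by
  have hkey : Tendsto (fun k : ℕ => μ {a | (k : ℝ) ≤ g a}) atTop (nhds 0) := by
    have hempty : ⋂ k : ℕ, {a | (k : ℝ) ≤ g a} = (∅ : Set α) := by
      ext a
      simp only [Set.mem_iInter, Set.mem_setOf_eq, Set.mem_empty_iff_false, iff_false, not_forall]
      obtain ⟨k, hk⟩ := exists_nat_gt (g a)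
      exact ⟨k, not_le.mpr hk⟩
    have := tendsto_measure_iInter_atTop (μ := μ)
      (s := fun k : ℕ => {a | (k : ℝ) ≤ g a})
      (fun k => (hg measurableSet_Ici).nullMeasurableSet)
      (fun i j hij a ha => le_trans (show (i:ℝ) ≤ (j:ℝ) by exact_mod_cast hij) ha)
      ⟨0, measure_ne_top μ _⟩
    rwa [hempty, measure_empty] at this
  rw [ENNReal.tendsto_atTop_zero] at hkey ⊢
  intro ε hε
  obtain ⟨K, hK⟩ := hkey ε hε
  obtain ⟨N, hN⟩ := eventually_atTop.mp (hc.eventually_ge_atTop (K : ℝ))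
  refine ⟨N, fun n hn => ?_⟩
  calc μ {a | c n ≤ g a} ≤ μ {a | (K : ℝ) ≤ g a} :=
        measure_mono (fun a ha => le_trans (hN n hn) ha)
    _ ≤ ε := hK K le_rfl

theorem shock_choice_prob_tendsto {X : Type*} [Fintype X]
    (μ : Measure (X → ℝ)) [IsProbabilityMeasure μ]
    (f : (X → ℝ) → ENNReal) (hμ : μ = volume.withDensity f)
    (hopen : IsOpen {ε : X → ℝ | f ε ≠ 0})
    (hconv : Convex ℝ {ε : X → ℝ | f ε ≠ 0})
    (h0 : f 0 ≠ 0)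
    (π : X ≃ Fin (Fintype.card X)) (u : ℕ → X → ℝ)
    (hu : ∀ x y : X, π y < π x → Tendsto (fun n => u n x - u n y) atTop atTop) :
    ∀ D : Finset X, ∀ x ∈ D,
      ((∀ y ∈ D, y ≠ x → π y < π x) →
        Tendsto (fun n =>
            (μ {ε : X → ℝ | ∀ y ∈ D, y ≠ x → u n y + ε y < u n x + ε x}).toReal)
          atTop (nhds 1)) ∧
      (¬ (∀ y ∈ D, y ≠ x → π y < π x) →
        Tendsto (fun n =>
            (μ {ε : X → ℝ | ∀ y ∈ D, y ≠ x → u n y + ε y < u n x + ε x}).toReal)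
          atTop (nhds 0)) := by
  intro D x hxD
  classical
  have hmeas : ∀ n, MeasurableSet
      {ε : X → ℝ | ∀ y ∈ D, y ≠ x → u n y + ε y < u n x + ε x} := by
    intro n
    have heq : {ε : X → ℝ | ∀ y ∈ D, y ≠ x → u n y + ε y < u n x + ε x} =
        ⋂ y ∈ (D : Set X), {ε : X → ℝ | y ≠ x → u n y + ε y < u n x + ε x} := by
      ext ε; simp
    rw [heq]
    refine MeasurableSet.biInter (Set.to_countable _) (fun y _ => ?_)
    by_cases hyx : y = x
    · simp [hyx]
    · have heq2 : {ε : X → ℝ | y ≠ x → u n y + ε y < u n x + ε x} =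
          {ε : X → ℝ | u n y + ε y < u n x + ε x} := by
        ext ε; simp [hyx]
      rw [heq2]
      exact measurableSet_lt (by fun_prop) (by fun_prop)
  constructor
  · -- `x` is `π`-best in `D`
    intro hbest
    have htail : ∀ y ∈ D.erase x,
        Tendsto (fun n => (μ {ε : X → ℝ | u n x - u n y ≤ ε y - ε x}).toReal)
          atTop (nhds 0) := by
      intro y hy
      have hy' := Finset.mem_erase.mp hy
      have h := tail_measure_tendsto_zero μ
        (g := fun ε : X → ℝ => ε y - ε x) (by fun_prop)
        (c := fun n => u n x - u n y) (hu x y (hbest y hy'.2 hy'.1))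
      simpa [Function.comp_def] using (ENNReal.tendsto_toReal (by simp)).comp h
    have hsum : Tendsto (fun n => ∑ y ∈ D.erase x,
        (μ {ε : X → ℝ | u n x - u n y ≤ ε y - ε x}).toReal) atTop (nhds 0) := by
      have := tendsto_finset_sum (D.erase x) (fun y hy => htail y hy)
      simpa using this
    have hcompl : Tendsto (fun n =>
        (μ {ε : X → ℝ | ∀ y ∈ D, y ≠ x → u n y + ε y < u n x + ε x}ᶜ).toReal)
        atTop (nhds 0) := by
      refine squeeze_zero (fun n => ENNReal.toReal_nonneg) (fun n => ?_) hsum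
      have hsub : {ε : X → ℝ | ∀ y ∈ D, y ≠ x → u n y + ε y < u n x + ε x}ᶜ ⊆
          ⋃ y ∈ D.erase x, {ε : X → ℝ | u n x - u n y ≤ ε y - ε x} := by
        intro ε hε
        simp only [Set.mem_compl_iff, Set.mem_setOf_eq, not_forall] at hε
        obtain ⟨y, hyD, hyx, hle⟩ := hε
        refine Set.mem_biUnion (Finset.mem_erase.mpr ⟨hyx, hyD⟩) ?_
        simp only [Set.mem_setOf_eq]
        linarith [not_lt.mp hle]
      have hfin : (∑ y ∈ D.erase x, μ {ε : X → ℝ | u n x - u n y ≤ ε y - ε x}) ≠ ⊤ :=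
        (ENNReal.sum_lt_top.mpr fun y _ => measure_lt_top μ _).ne
      calc (μ _).toReal
          ≤ (∑ y ∈ D.erase x, μ {ε : X → ℝ | u n x - u n y ≤ ε y - ε x}).toReal :=
            ENNReal.toReal_mono hfin
              ((measure_mono hsub).trans (measure_biUnion_finset_le _ _))
        _ = _ := ENNReal.toReal_sum (fun y _ => measure_ne_top μ _)
    have heq : ∀ n,
        (μ {ε : X → ℝ | ∀ y ∈ D, y ≠ x → u n y + ε y < u n x + ε x}).toReal =
        1 - (μ {ε : X → ℝ | ∀ y ∈ D, y ≠ x → u n y + ε y < u n x + ε x}ᶜ).toReal := by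
      intro n
      have h1 : μ {ε : X → ℝ | ∀ y ∈ D, y ≠ x → u n y + ε y < u n x + ε x} +
          μ {ε : X → ℝ | ∀ y ∈ D, y ≠ x → u n y + ε y < u n x + ε x}ᶜ = 1 := by
        rw [measure_add_measure_compl (hmeas n)]; simp
      have := congrArg ENNReal.toReal h1
      rw [ENNReal.toReal_add (measure_ne_top μ _) (measure_ne_top μ _)] at this
      simp at this
      linarith
    simp only [heq]
    have : Tendsto (fun n => 1 -
        (μ {ε : X → ℝ | ∀ y ∈ D, y ≠ x → u n y + ε y < u n x + ε x}ᶜ).toReal)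
        atTop (nhds (1 - 0)) := tendsto_const_nhds.sub hcompl
    simpa using this
  · -- `x` is not `π`-best in `D`
    intro hnot
    push_neg at hnot
    obtain ⟨y₀, hy₀D, hy₀x, hy₀π⟩ := hnot
    have hπ : π x < π y₀ := by
      rcases lt_or_eq_of_le hy₀π with h | h
      · exact h
      · exact absurd (π.injective h).symm hy₀x
    have h := tail_measure_tendsto_zero μ
      (g := fun ε : X → ℝ => ε x - ε y₀) (by fun_prop)
      (c := fun n => u n y₀ - u n x) (hu y₀ x hπ)
    have h' : Tendsto (fun n => (μ {a : X → ℝ | u n y₀ - u n x ≤ a x - a y₀}).toReal)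
        atTop (nhds 0) := by
      simpa [Function.comp_def] using (ENNReal.tendsto_toReal (by simp)).comp h
    refine squeeze_zero (fun n => ENNReal.toReal_nonneg) (fun n => ?_) h'
    refine ENNReal.toReal_mono (measure_ne_top μ _) (measure_mono ?_)
    intro ε hε
    have := hε y₀ hy₀D hy₀x
    simp only [Set.mem_setOf_eq]
    linarith
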